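/- Consider an undirected graph G with n vertices that has a spanning tree, with an arbitrary orientation, incidence matrix H ∈ ℝ^{m×n}, and H̄ = H ⊗ I_d. Let p : ℝ → ℝ^{dn} be a differentiable trajectory with bounded derivative v(t) = ṗ(t), whose edge vectors e_k(t) = (H̄p(t))_k are nonzero for all t, with bearings g_k(t) = e_k(t)/‖e_k(t)‖ and bearing Laplacian L_B(t) = H̄ᵀ blkdiag(π_{g_1(t)},…,π_{g_m(t)}) H̄. Assume the formation is bearing persistently exciting: there exist T > 0 and μ > 0 such that ∫_t^{t+T} L_B(τ) dτ ≥ μ H̄ᵀH̄ for all t. Then for any solution p̂ : ℝ → ℝ^{dn} of the observer dynamics dp̂/dt = v(t) − L_B(t) p̂(t), the error ζ(t) = p̂(t) − p(t) − (1/n) U Uᵀ (p̂(0) − p(0)) converges to zero uniformly globally exponentially; in particular p̂(t) converges exponentially to p(t) plus the fixed translational vector (1/n) U Uᵀ (p̂(0) − p(0)). -/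

import Mathlib

open MeasureTheory Matrix
open scoped Kronecker

/-- The projection operator `π_y = I_d - y yᵀ`. -/
noncomputable def proj {d : ℕ} (y : Fin d → ℝ) : Matrix (Fin d) (Fin d) ℝ :=
  1 - Matrix.vecMulVec y y

/-- `H` is the incidence matrix of an oriented graph. -/
def IsIncidence {m n : ℕ} (H : Matrix (Fin m) (Fin n) ℝ) : Prop :=
  ∃ head tail : Fin m → Fin n, (∀ k, head k ≠ tail k) ∧
    ∀ k i, H k i = if i = head k then 1 else if i = tail k then -1 else 0

/-- `H̄ = H ⊗ I_d`. -/
noncomputable def Hbar {m n : ℕ} (d : ℕ) (H : Matrix (Fin m) (Fin n) ℝ) :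
    Matrix (Fin m × Fin d) (Fin n × Fin d) ℝ :=
  H ⊗ₖ (1 : Matrix (Fin d) (Fin d) ℝ)

/-- `Π = blkdiag(π_{g_1}, …, π_{g_m})`. -/
noncomputable def blkProj {m d : ℕ} (g : Fin m → Fin d → ℝ) :
    Matrix (Fin m × Fin d) (Fin m × Fin d) ℝ :=
  Matrix.of fun p q => if p.1 = q.1 then proj (g p.1) p.2 q.2 else 0

/-- Euclidean norm of a vector in `ℝ^d`. -/
noncomputable def enorm {d : ℕ} (v : Fin d → ℝ) : ℝ := Real.sqrt (v ⬝ᵥ v)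

/-- The bearing (unit vector) of a nonzero vector. -/
noncomputable def bearingOf {d : ℕ} (v : Fin d → ℝ) : Fin d → ℝ := (_root_.enorm v)⁻¹ • v

/-- The `k`-th edge vector `e_k = (H̄ p)_k ∈ ℝ^d` of a configuration `p`. -/
noncomputable def edgeVec {m n d : ℕ} (H : Matrix (Fin m) (Fin n) ℝ)
    (p : Fin n × Fin d → ℝ) (k : Fin m) : Fin d → ℝ :=
  fun i => (Hbar d H).mulVec p (k, i)

/-- The bearing Laplacian `L_B = H̄ᵀ Π H̄` of a configuration `p`. -/
noncomputable def LB {m n : ℕ} {d : ℕ} (H : Matrix (Fin m) (Fin n) ℝ)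
    (p : Fin n × Fin d → ℝ) : Matrix (Fin n × Fin d) (Fin n × Fin d) ℝ :=
  (Hbar d H)ᵀ * blkProj (fun k => bearingOf (edgeVec H p k)) * Hbar d H

/-- `U = 1_n ⊗ I_d`. -/
noncomputable def Umat (n d : ℕ) : Matrix (Fin n × Fin d) (Fin d) ℝ :=
  Matrix.of fun p j => if p.2 = j then 1 else 0

/-! ### basic expansions -/

lemma hbar_mulVec {m n d : ℕ} (H : Matrix (Fin m) (Fin n) ℝ) (x : Fin n × Fin d → ℝ)
    (k : Fin m) (i : Fin d) :
    (Hbar d H).mulVec x (k, i) = ∑ j, H k j * x (j, i) := by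
  simp [Hbar, Matrix.mulVec, dotProduct, Fintype.sum_prod_type,
    Matrix.one_apply, mul_ite, ite_mul, mul_assoc]

lemma hbarT_mulVec {m n d : ℕ} (H : Matrix (Fin m) (Fin n) ℝ) (y : Fin m × Fin d → ℝ)
    (j : Fin n) (i : Fin d) :
    (Hbar d H)ᵀ.mulVec y (j, i) = ∑ k, H k j * y (k, i) := by
  simp [Hbar, Matrix.mulVec, dotProduct, Fintype.sum_prod_type,
    Matrix.transpose_apply, Matrix.one_apply, mul_ite, ite_mul, mul_assoc]

lemma incid_split {m n : ℕ} {H : Matrix (Fin m) (Fin n) ℝ} (hH : IsIncidence H) :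
    ∃ hd tl : Fin m → Fin n, (∀ k, hd k ≠ tl k) ∧
      ∀ k j, H k j = (if j = hd k then (1:ℝ) else 0) + (if j = tl k then -1 else 0) := by
  obtain ⟨hd, tl, hne, hval⟩ := hH
  refine ⟨hd, tl, hne, fun k j => ?_⟩
  rw [hval]
  by_cases h1 : j = hd k
  · rw [if_pos h1, if_pos h1, if_neg (fun h2 => hne k (h1.symm.trans h2))]; ring
  · rw [if_neg h1, if_neg h1]
    by_cases h2 : j = tl k
    · rw [if_pos h2]; ring
    · rw [if_neg h2]; ring

lemma row_sum {m n : ℕ} {H : Matrix (Fin m) (Fin n) ℝ} (hH : IsIncidence H) (k : Fin m) :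
    ∑ j, H k j = 0 := by
  obtain ⟨hd, tl, hne, hval⟩ := incid_split hH
  simp [hval, Finset.sum_add_distrib, Finset.sum_ite_eq']

lemma row_sq_sum {m n : ℕ} {H : Matrix (Fin m) (Fin n) ℝ} (hH : IsIncidence H) (k : Fin m) :
    ∑ j, (H k j)^2 = 2 := by
  obtain ⟨hd, tl, hne, hval⟩ := hH
  have : ∀ j : Fin n, (H k j)^2
      = (if j = hd k then (1:ℝ) else 0) + (if j = tl k then 1 else 0) := by
    intro j; rw [hval]
    by_cases h1 : j = hd k
    · rw [if_pos h1, if_pos h1, if_neg (fun h2 => hne k (h1.symm.trans h2))]; ring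
    · rw [if_neg h1, if_neg h1]
      by_cases h2 : j = tl k
      · rw [if_pos h2, if_pos h2]; ring
      · rw [if_neg h2, if_neg h2]; ring
  rw [Finset.sum_congr rfl fun j _ => this j]
  simp [Finset.sum_add_distrib, Finset.sum_ite_eq']
  norm_num

/-- `H̄ (U z) = 0`. -/
lemma hbar_U {m n d : ℕ} {H : Matrix (Fin m) (Fin n) ℝ} (hH : IsIncidence H)
    (z : Fin d → ℝ) : (Hbar d H).mulVec ((Umat n d).mulVec z) = 0 := by
  funext a
  obtain ⟨k, i⟩ := a
  rw [hbar_mulVec]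
  have : ∀ j : Fin n, (Umat n d).mulVec z (j, i) = z i := by
    intro j
    simp [Umat, Matrix.mulVec, dotProduct, ite_mul, Finset.sum_ite_eq]
  simp only [this, ← Finset.sum_mul, row_sum hH k, zero_mul, Pi.zero_apply]

lemma UTU {n d : ℕ} (z : Fin d → ℝ) (j : Fin d) :
    (Umat n d)ᵀ.mulVec ((Umat n d).mulVec z) j = n * z j := by
  simp [Umat, Matrix.mulVec, dotProduct, Fintype.sum_prod_type,
    Matrix.transpose_apply, ite_mul, Finset.sum_ite_eq]

lemma UT_apply {n d : ℕ} (x : Fin n × Fin d → ℝ) (j : Fin d) :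
    (Umat n d)ᵀ.mulVec x j = ∑ jn : Fin n, x (jn, j) := by
  simp [Umat, Matrix.mulVec, dotProduct, Fintype.sum_prod_type,
    Matrix.transpose_apply, ite_mul]

/-! ### quadratic bounds -/

/-- `‖H̄ x‖² ≤ 4 m ⟨x,x⟩`. -/
lemma hbar_sq_bound {m n d : ℕ} {H : Matrix (Fin m) (Fin n) ℝ} (hH : IsIncidence H)
    (x : Fin n × Fin d → ℝ) :
    ((Hbar d H).mulVec x) ⬝ᵥ ((Hbar d H).mulVec x) ≤ 4 * m * (x ⬝ᵥ x) := by
  obtain ⟨hd, tl, hne, hval⟩ := incid_split hH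
  have key : ∀ (k : Fin m) (i : Fin d),
      (Hbar d H).mulVec x (k, i) = x (hd k, i) - x (tl k, i) := by
    intro k i
    rw [hbar_mulVec]
    simp [hval, add_mul, Finset.sum_add_distrib, Finset.sum_ite_eq', ite_mul, sub_eq_add_neg]
  have hxx : ∀ (j : Fin n), (∑ i, (x (j,i))^2) ≤ x ⬝ᵥ x := by
    intro j
    rw [dotProduct, Fintype.sum_prod_type]
    have : ∀ j' : Fin n, (0:ℝ) ≤ ∑ i, x (j', i) * x (j', i) :=
      fun j' => Finset.sum_nonneg fun i _ => mul_self_nonneg _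
    calc (∑ i, (x (j,i))^2) = ∑ i, x (j,i) * x (j,i) := by simp [sq]
    _ ≤ ∑ j', ∑ i, x (j', i) * x (j', i) :=
        Finset.single_le_sum (fun j' _ => this j') (Finset.mem_univ j)
  calc ((Hbar d H).mulVec x) ⬝ᵥ ((Hbar d H).mulVec x)
      = ∑ k : Fin m, ∑ i : Fin d, (x (hd k, i) - x (tl k, i))^2 := by
        rw [dotProduct, Fintype.sum_prod_type]
        exact Finset.sum_congr rfl fun k _ => Finset.sum_congr rfl fun i _ => by
          rw [key k i, sq]
    _ ≤ ∑ k : Fin m, ∑ i : Fin d, (2 * (x (hd k, i))^2 + 2 * (x (tl k, i))^2) := by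
        refine Finset.sum_le_sum fun k _ => Finset.sum_le_sum fun i _ => ?_
        nlinarith [sq_nonneg (x (hd k, i) + x (tl k, i))]
    _ = ∑ k : Fin m, (2 * (∑ i, (x (hd k, i))^2) + 2 * (∑ i, (x (tl k, i))^2)) := by
        simp [Finset.sum_add_distrib, Finset.mul_sum]
    _ ≤ ∑ k : Fin m, (2 * (x ⬝ᵥ x) + 2 * (x ⬝ᵥ x)) := by
        refine Finset.sum_le_sum fun k _ => ?_
        have h1 := hxx (hd k); have h2 := hxx (tl k)
        nlinarith
    _ = 4 * m * (x ⬝ᵥ x) := by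
        rw [Finset.sum_const]
        simp; ring

/-- `‖H̄ᵀ y‖² ≤ 2 m ⟨y,y⟩`. -/
lemma hbarT_sq_bound {m n d : ℕ} {H : Matrix (Fin m) (Fin n) ℝ} (hH : IsIncidence H)
    (y : Fin m × Fin d → ℝ) :
    ((Hbar d H)ᵀ.mulVec y) ⬝ᵥ ((Hbar d H)ᵀ.mulVec y) ≤ 2 * m * (y ⬝ᵥ y) := by
  have key : ∀ (j : Fin n) (i : Fin d),
      ((Hbar d H)ᵀ.mulVec y (j,i))^2 ≤ m * ∑ k, (H k j)^2 * (y (k,i))^2 := by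
    intro j i
    rw [hbarT_mulVec]
    calc (∑ k, H k j * y (k,i))^2 ≤ (∑ k : Fin m, (1:ℝ)^2) * ∑ k, (H k j * y (k,i))^2 := by
          have := Finset.sum_mul_sq_le_sq_mul_sq Finset.univ
            (fun _ : Fin m => (1:ℝ)) (fun k => H k j * y (k,i))
          simpa using this
      _ = m * ∑ k, (H k j)^2 * (y (k,i))^2 := by
          simp [mul_pow]
  calc ((Hbar d H)ᵀ.mulVec y) ⬝ᵥ ((Hbar d H)ᵀ.mulVec y)
      = ∑ j : Fin n, ∑ i : Fin d, ((Hbar d H)ᵀ.mulVec y (j,i))^2 := by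
        rw [dotProduct, Fintype.sum_prod_type]
        exact Finset.sum_congr rfl fun j _ => Finset.sum_congr rfl fun i _ => (sq _).symm
    _ ≤ ∑ j : Fin n, ∑ i : Fin d, m * ∑ k, (H k j)^2 * (y (k,i))^2 :=
        Finset.sum_le_sum fun j _ => Finset.sum_le_sum fun i _ => key j i
    _ = m * ∑ k : Fin m, (∑ j, (H k j)^2) * (∑ i, (y (k,i))^2) := by
        simp only [← Finset.mul_sum]
        congr 1
        calc ∑ j : Fin n, ∑ i : Fin d, ∑ k : Fin m, (H k j)^2 * (y (k,i))^2
            = ∑ j : Fin n, ∑ k : Fin m, ∑ i : Fin d, (H k j)^2 * (y (k,i))^2 :=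
              Finset.sum_congr rfl fun j _ => by exact Finset.sum_comm
          _ = ∑ k : Fin m, ∑ j : Fin n, ∑ i : Fin d, (H k j)^2 * (y (k,i))^2 := by
              exact Finset.sum_comm
          _ = ∑ k : Fin m, (∑ j, (H k j)^2) * (∑ i, (y (k,i))^2) :=
              Finset.sum_congr rfl fun k _ => by rw [Finset.sum_mul_sum]
    _ = 2 * m * (y ⬝ᵥ y) := by
        rw [Finset.sum_congr rfl fun k _ => by rw [row_sq_sum hH k]]
        rw [dotProduct, Fintype.sum_prod_type]
        rw [Finset.mul_sum, Finset.mul_sum]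
        refine Finset.sum_congr rfl fun k _ => ?_
        simp only [sq]
        ring

/-! ### projection block lemmas -/

lemma dotProduct_self_nonneg {ι : Type*} [Fintype ι] (v : ι → ℝ) : 0 ≤ v ⬝ᵥ v :=
  Finset.sum_nonneg fun i _ => mul_self_nonneg _

lemma dotProduct_self_pos {ι : Type*} [Fintype ι] {v : ι → ℝ} (hv : v ≠ 0) : 0 < v ⬝ᵥ v := by
  rcases lt_or_eq_of_le (dotProduct_self_nonneg v) with h | h
  · exact h
  · exact absurd ((dotProduct_self_eq_zero).1 h.symm) hv

lemma enorm_pos_fin {d : ℕ} {v : Fin d → ℝ} (hv : v ≠ 0) : 0 < _root_.enorm v :=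
  Real.sqrt_pos.2 (dotProduct_self_pos hv)

lemma bearing_unit {d : ℕ} {v : Fin d → ℝ} (hv : v ≠ 0) :
    bearingOf v ⬝ᵥ bearingOf v = 1 := by
  have h1 : 0 < v ⬝ᵥ v := dotProduct_self_pos hv
  simp only [bearingOf, smul_dotProduct, dotProduct_smul, smul_eq_mul, _root_.enorm]
  rw [← mul_assoc, ← mul_inv]
  rw [Real.mul_self_sqrt h1.le]
  exact inv_mul_cancel₀ h1.ne'

lemma bearing_dot_self {d : ℕ} {v : Fin d → ℝ} (hv : v ≠ 0) :
    bearingOf v ⬝ᵥ v = _root_.enorm v := by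
  have h1 : 0 < v ⬝ᵥ v := dotProduct_self_pos hv
  simp only [bearingOf, smul_dotProduct, smul_eq_mul, _root_.enorm]
  rw [inv_mul_eq_iff_eq_mul₀ (Real.sqrt_pos.2 h1).ne']
  rw [Real.mul_self_sqrt h1.le]

lemma blkProj_mulVec {m d : ℕ} (g : Fin m → Fin d → ℝ) (y : Fin m × Fin d → ℝ)
    (k : Fin m) (i : Fin d) :
    (blkProj g).mulVec y (k, i)
      = y (k, i) - (g k ⬝ᵥ fun i' => y (k, i')) * g k i := by
  simp only [blkProj, Matrix.mulVec, dotProduct, Fintype.sum_prod_type,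
    Matrix.of_apply, proj, Matrix.sub_apply, Matrix.one_apply, Matrix.vecMulVec_apply]
  rw [Finset.sum_eq_single k]
  · simp only [if_pos rfl, if_true, sub_mul, Finset.sum_sub_distrib, ite_mul, one_mul,
      zero_mul, Finset.sum_ite_eq, Finset.mem_univ]
    congr 1
    calc ∑ i', g k i * g k i' * y (k, i') = g k i * ∑ i', g k i' * y (k, i') := by
          rw [Finset.mul_sum]; exact Finset.sum_congr rfl fun i' _ => by ring
      _ = (∑ i', g k i' * y (k, i')) * g k i := mul_comm _ _
  · intro b _ hb
    simp [Ne.symm hb]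
  · simp

lemma blk_pointwise {m d : ℕ} (g : Fin m → Fin d → ℝ) (y : Fin m × Fin d → ℝ) (k : Fin m) :
    (fun i => y (k,i)) ⬝ᵥ (fun i => (blkProj g).mulVec y (k, i))
      = ((fun i => y (k,i)) ⬝ᵥ fun i => y (k,i)) - (g k ⬝ᵥ fun i' => y (k, i'))^2 := by
  simp only [dotProduct, blkProj_mulVec]
  rw [Finset.sum_congr rfl (fun i (_ : i ∈ Finset.univ) => mul_sub (y (k,i)) _ _)]
  rw [Finset.sum_sub_distrib]
  congr 1
  calc ∑ i, y (k,i) * ((∑ i', g k i' * y (k,i')) * g k i)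
      = ∑ i, (∑ i', g k i' * y (k,i')) * (g k i * y (k,i)) :=
        Finset.sum_congr rfl fun i _ => by ring
    _ = (∑ i', g k i' * y (k,i')) * ∑ i, g k i * y (k,i) := by rw [← Finset.mul_sum]
    _ = (∑ i', g k i' * y (k,i'))^2 := by rw [sq]
lemma blk_quad {m d : ℕ} (g : Fin m → Fin d → ℝ) (y : Fin m × Fin d → ℝ) :
    y ⬝ᵥ (blkProj g).mulVec y
      = ∑ k, (((fun i => y (k,i)) ⬝ᵥ fun i => y (k,i)) - (g k ⬝ᵥ fun i' => y (k, i'))^2) := by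
  rw [dotProduct, Fintype.sum_prod_type]
  exact Finset.sum_congr rfl fun k _ => blk_pointwise g y k

lemma dot_split {m d : ℕ} (y : Fin m × Fin d → ℝ) :
    y ⬝ᵥ y = ∑ k, ((fun i => y (k,i)) ⬝ᵥ fun i => y (k,i)) := by
  rw [dotProduct, Fintype.sum_prod_type]; rfl

lemma blk_quad_nonneg {m d : ℕ} {g : Fin m → Fin d → ℝ} (hg : ∀ k, g k ⬝ᵥ g k = 1)
    (y : Fin m × Fin d → ℝ) : 0 ≤ y ⬝ᵥ (blkProj g).mulVec y := by
  rw [blk_quad]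
  refine Finset.sum_nonneg fun k _ => sub_nonneg.2 ?_
  have := Finset.sum_mul_sq_le_sq_mul_sq Finset.univ (g k) (fun i => y (k,i))
  calc (g k ⬝ᵥ fun i' => y (k,i'))^2 = (∑ i, g k i * y (k,i))^2 := rfl
    _ ≤ (∑ i, (g k i)^2) * ∑ i, (y (k,i))^2 := this
    _ = ((fun i => y (k,i)) ⬝ᵥ fun i => y (k,i)) := by
        have h1 : (∑ i, (g k i)^2) = 1 := by
          have := hg k; simpa [dotProduct, sq] using this
        rw [h1, one_mul, dotProduct]
        exact Finset.sum_congr rfl fun i _ => (sq _)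

lemma blk_quad_le {m d : ℕ} (g : Fin m → Fin d → ℝ) (y : Fin m × Fin d → ℝ) :
    y ⬝ᵥ (blkProj g).mulVec y ≤ y ⬝ᵥ y := by
  rw [blk_quad, dot_split]
  exact Finset.sum_le_sum fun k _ => by nlinarith [sq_nonneg (g k ⬝ᵥ fun i' => y (k,i'))]

/-- `‖Π y‖² = yᵀ Π y` when the bearings are unit vectors. -/
lemma blk_proj_norm {m d : ℕ} {g : Fin m → Fin d → ℝ} (hg : ∀ k, g k ⬝ᵥ g k = 1)
    (y : Fin m × Fin d → ℝ) :
    ((blkProj g).mulVec y) ⬝ᵥ ((blkProj g).mulVec y) = y ⬝ᵥ (blkProj g).mulVec y := by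
  rw [blk_quad, dot_split]
  refine Finset.sum_congr rfl fun k _ => ?_
  have hgg : (∑ i, g k i * g k i) = 1 := hg k
  simp only [dotProduct, blkProj_mulVec]
  set S := (∑ i', g k i' * y (k,i')) with hS
  have e1 : ∀ i, (y (k,i) - S * g k i) * (y (k,i) - S * g k i)
      = y (k,i) * y (k,i) - 2 * S * (g k i * y (k,i)) + S^2 * (g k i * g k i) := by
    intro i; ring
  rw [Finset.sum_congr rfl fun i _ => e1 i]
  rw [Finset.sum_add_distrib, Finset.sum_sub_distrib, ← Finset.mul_sum, ← Finset.mul_sum]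
  rw [hgg, ← hS]
  ring

lemma blk_symm {m d : ℕ} (g : Fin m → Fin d → ℝ) : (blkProj g)ᵀ = blkProj g := by
  ext a b
  obtain ⟨k, i⟩ := a; obtain ⟨k', i'⟩ := b
  simp only [Matrix.transpose_apply, blkProj, Matrix.of_apply, proj, Matrix.sub_apply,
    Matrix.one_apply, Matrix.vecMulVec_apply]
  by_cases h : k = k'
  · subst h; simp only [if_pos rfl]
    by_cases h2 : i = i' <;> simp [h2, eq_comm, mul_comm]
  · rw [if_neg h, if_neg (Ne.symm h)]

/-! ### LB lemmas -/

lemma LB_mulVec {m n d : ℕ} (H : Matrix (Fin m) (Fin n) ℝ) (p x : Fin n × Fin d → ℝ) :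
    (LB H p).mulVec x = (Hbar d H)ᵀ.mulVec
      ((blkProj (fun k => bearingOf (edgeVec H p k))).mulVec ((Hbar d H).mulVec x)) := by
  rw [LB, Matrix.mulVec_mulVec, Matrix.mulVec_mulVec]

lemma dot_hbarT {m n d : ℕ} (H : Matrix (Fin m) (Fin n) ℝ) (x : Fin n × Fin d → ℝ)
    (w : Fin m × Fin d → ℝ) :
    x ⬝ᵥ (Hbar d H)ᵀ.mulVec w = ((Hbar d H).mulVec x) ⬝ᵥ w := by
  rw [Matrix.dotProduct_mulVec, Matrix.vecMul_transpose]

lemma LB_quad {m n d : ℕ} (H : Matrix (Fin m) (Fin n) ℝ) (p x : Fin n × Fin d → ℝ) :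
    x ⬝ᵥ (LB H p).mulVec x = ((Hbar d H).mulVec x) ⬝ᵥ
      ((blkProj (fun k => bearingOf (edgeVec H p k))).mulVec ((Hbar d H).mulVec x)) := by
  rw [LB_mulVec, dot_hbarT]

lemma LB_quad_nonneg {m n d : ℕ} (H : Matrix (Fin m) (Fin n) ℝ) {p : Fin n × Fin d → ℝ}
    (hnz : ∀ k, edgeVec H p k ≠ 0) (x : Fin n × Fin d → ℝ) :
    0 ≤ x ⬝ᵥ (LB H p).mulVec x := by
  rw [LB_quad]
  exact blk_quad_nonneg (fun k => bearing_unit (hnz k)) _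

lemma LB_quad_le {m n d : ℕ} {H : Matrix (Fin m) (Fin n) ℝ} (hH : IsIncidence H)
    (p x : Fin n × Fin d → ℝ) :
    x ⬝ᵥ (LB H p).mulVec x ≤ 4 * m * (x ⬝ᵥ x) := by
  rw [LB_quad]
  calc _ ≤ ((Hbar d H).mulVec x) ⬝ᵥ ((Hbar d H).mulVec x) := blk_quad_le _ _
    _ ≤ 4 * m * (x ⬝ᵥ x) := hbar_sq_bound hH x

lemma LB_mulVec_sq_le {m n d : ℕ} {H : Matrix (Fin m) (Fin n) ℝ} (hH : IsIncidence H)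
    {p : Fin n × Fin d → ℝ} (hnz : ∀ k, edgeVec H p k ≠ 0) (x : Fin n × Fin d → ℝ) :
    ((LB H p).mulVec x) ⬝ᵥ ((LB H p).mulVec x) ≤ 2 * m * (x ⬝ᵥ (LB H p).mulVec x) := by
  set g := fun k => bearingOf (edgeVec H p k) with hg
  set y := (Hbar d H).mulVec x with hy
  set w := (blkProj g).mulVec y with hw
  have h1 : (LB H p).mulVec x = (Hbar d H)ᵀ.mulVec w := LB_mulVec H p x
  have h2 : x ⬝ᵥ (LB H p).mulVec x = y ⬝ᵥ w := LB_quad H p x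
  rw [h2, h1]
  calc ((Hbar d H)ᵀ.mulVec w) ⬝ᵥ ((Hbar d H)ᵀ.mulVec w) ≤ 2 * m * (w ⬝ᵥ w) :=
        hbarT_sq_bound hH _
    _ = 2 * m * (y ⬝ᵥ w) := by
        rw [hw, blk_proj_norm (fun k => bearing_unit (hnz k))]

lemma LB_symm {m n d : ℕ} (H : Matrix (Fin m) (Fin n) ℝ) (p : Fin n × Fin d → ℝ) :
    (LB H p)ᵀ = LB H p := by
  rw [LB, Matrix.transpose_mul, Matrix.transpose_mul, Matrix.transpose_transpose,
    blk_symm, Matrix.mul_assoc]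

lemma dot_symm_LB {m n d : ℕ} (H : Matrix (Fin m) (Fin n) ℝ) (p : Fin n × Fin d → ℝ)
    (a b : Fin n × Fin d → ℝ) :
    a ⬝ᵥ (LB H p).mulVec b = b ⬝ᵥ (LB H p).mulVec a := by
  rw [Matrix.dotProduct_mulVec]
  conv_lhs => rw [← LB_symm H p]
  rw [Matrix.vecMul_transpose, dotProduct_comm]

/-- `L_B p = 0`. -/
lemma LB_p_zero {m n d : ℕ} (H : Matrix (Fin m) (Fin n) ℝ) {p : Fin n × Fin d → ℝ}
    (hnz : ∀ k, edgeVec H p k ≠ 0) : (LB H p).mulVec p = 0 := by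
  rw [LB_mulVec]
  have h0 : (blkProj (fun k => bearingOf (edgeVec H p k))).mulVec ((Hbar d H).mulVec p) = 0 := by
    funext a
    obtain ⟨k, i⟩ := a
    rw [blkProj_mulVec]
    have he : (fun i' => (Hbar d H).mulVec p (k, i')) = edgeVec H p k := rfl
    rw [he, bearing_dot_self (hnz k)]
    have : (Hbar d H).mulVec p (k,i) = edgeVec H p k i := rfl
    rw [this]
    simp only [bearingOf, Pi.smul_apply, smul_eq_mul, Pi.zero_apply]
    rw [← mul_assoc, mul_inv_cancel₀ (enorm_pos_fin (hnz k)).ne', one_mul, sub_self]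
  rw [h0, Matrix.mulVec_zero]

/-- `L_B (U z) = 0`. -/
lemma LB_U_zero {m n d : ℕ} {H : Matrix (Fin m) (Fin n) ℝ} (hH : IsIncidence H)
    (p : Fin n × Fin d → ℝ) (z : Fin d → ℝ) :
    (LB H p).mulVec ((Umat n d).mulVec z) = 0 := by
  rw [LB_mulVec, hbar_U hH, Matrix.mulVec_zero, Matrix.mulVec_zero]

/-- column sums of `L_B x` vanish. -/
lemma LB_col_sum {m n d : ℕ} {H : Matrix (Fin m) (Fin n) ℝ} (hH : IsIncidence H)
    (p x : Fin n × Fin d → ℝ) (i : Fin d) :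
    ∑ jn : Fin n, (LB H p).mulVec x (jn, i) = 0 := by
  rw [LB_mulVec]
  set w := (blkProj (fun k => bearingOf (edgeVec H p k))).mulVec ((Hbar d H).mulVec x)
  calc ∑ jn : Fin n, (Hbar d H)ᵀ.mulVec w (jn, i)
      = ∑ jn : Fin n, ∑ k, H k jn * w (k, i) :=
        Finset.sum_congr rfl fun jn _ => hbarT_mulVec H w jn i
    _ = ∑ k, (∑ jn : Fin n, H k jn) * w (k, i) := by
        rw [Finset.sum_comm]
        exact Finset.sum_congr rfl fun k _ => (Finset.sum_mul _ _ _).symm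
    _ = 0 := by simp [row_sum hH]

/-- parallelogram-type bound for a psd symmetric quadratic form. -/
lemma quad_sub_le {m n d : ℕ} (H : Matrix (Fin m) (Fin n) ℝ) {p : Fin n × Fin d → ℝ}
    (hnz : ∀ k, edgeVec H p k ≠ 0) (a b : Fin n × Fin d → ℝ) :
    (a - b) ⬝ᵥ (LB H p).mulVec (a - b)
      ≤ 2 * (a ⬝ᵥ (LB H p).mulVec a) + 2 * (b ⬝ᵥ (LB H p).mulVec b) := by
  have hplus := LB_quad_nonneg H hnz (a + b)
  have e1 : ∀ u v : Fin n × Fin d → ℝ, (u + v) ⬝ᵥ (LB H p).mulVec (u + v)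
      = u ⬝ᵥ (LB H p).mulVec u + u ⬝ᵥ (LB H p).mulVec v + v ⬝ᵥ (LB H p).mulVec u
        + v ⬝ᵥ (LB H p).mulVec v := by
    intro u v
    rw [Matrix.mulVec_add, add_dotProduct, dotProduct_add, dotProduct_add]
    ring
  have e2 : (a - b) ⬝ᵥ (LB H p).mulVec (a - b)
      = a ⬝ᵥ (LB H p).mulVec a - a ⬝ᵥ (LB H p).mulVec b - b ⬝ᵥ (LB H p).mulVec a
        + b ⬝ᵥ (LB H p).mulVec b := by
    rw [Matrix.mulVec_sub, sub_dotProduct, dotProduct_sub, dotProduct_sub]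
    ring
  rw [e1 a b] at hplus
  linarith

/-! ### spectral gap -/

lemma ker_const {m n : ℕ} {H : Matrix (Fin m) (Fin n) ℝ} (hH : IsIncidence H)
    (hst : H.rank = n - 1) (hn : 1 ≤ n) {v : Fin n → ℝ} (hv : H.mulVec v = 0) :
    ∃ c : ℝ, ∀ j, v j = c := by
  classical
  set K := LinearMap.ker H.mulVecLin with hK
  have hone : (fun _ => (1:ℝ)) ∈ K := by
    rw [hK, LinearMap.mem_ker]
    funext k
    simp only [Matrix.mulVecLin_apply, Matrix.mulVec, dotProduct, mul_one, Pi.zero_apply]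
    exact row_sum hH k
  have hone0 : (fun _ => (1:ℝ)) ≠ (0 : Fin n → ℝ) := by
    intro h
    have := congrFun h ⟨0, hn⟩
    norm_num at this
  have hrank : H.rank + Module.finrank ℝ K = n := by
    have := LinearMap.finrank_range_add_finrank_ker H.mulVecLin
    rw [Matrix.rank]
    simpa using this
  have hkdim : Module.finrank ℝ K = 1 := by omega
  have hspan : Submodule.span ℝ {(fun _ => (1:ℝ))} = K := by
    refine Submodule.eq_of_le_of_finrank_le ?_ ?_
    · rw [Submodule.span_le, Set.singleton_subset_iff]; exact hone
    · rw [hkdim, finrank_span_singleton hone0]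
  have hvK : v ∈ K := by rw [hK, LinearMap.mem_ker]; simpa using hv
  rw [← hspan, Submodule.mem_span_singleton] at hvK
  obtain ⟨c, hc⟩ := hvK
  exact ⟨c, fun j => by rw [← hc]; simp⟩

lemma gap_pos_on {m n d : ℕ} {H : Matrix (Fin m) (Fin n) ℝ} (hH : IsIncidence H)
    (hst : H.rank = n - 1) (hn : 1 ≤ n) {w : Fin n × Fin d → ℝ}
    (hU : (Umat n d)ᵀ.mulVec w = 0) (hw : w ≠ 0) :
    0 < w ⬝ᵥ ((Hbar d H)ᵀ * Hbar d H).mulVec w := by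
  have hquad : w ⬝ᵥ ((Hbar d H)ᵀ * Hbar d H).mulVec w
      = ((Hbar d H).mulVec w) ⬝ᵥ ((Hbar d H).mulVec w) := by
    rw [← Matrix.mulVec_mulVec, dot_hbarT]
  rw [hquad]
  rcases lt_or_eq_of_le (dotProduct_self_nonneg ((Hbar d H).mulVec w)) with h | h
  · exact h
  exfalso
  have hHw : (Hbar d H).mulVec w = 0 := (dotProduct_self_eq_zero).1 h.symm
  apply hw
  funext a
  obtain ⟨j, i⟩ := a
  have hker : H.mulVec (fun j' => w (j', i)) = 0 := by
    funext k
    have := congrFun hHw (k, i)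
    rw [hbar_mulVec] at this
    simpa [Matrix.mulVec, dotProduct] using this
  obtain ⟨c, hc⟩ := ker_const hH hst hn hker
  have hsum : ∑ jn : Fin n, w (jn, i) = 0 := by
    have := congrFun hU i
    rw [UT_apply] at this
    simpa using this
  have : (n : ℝ) * c = 0 := by
    rw [← hsum]
    simp [hc]
  have hc0 : c = 0 := by
    rcases mul_eq_zero.1 this with h' | h'
    · exact absurd h' (Nat.cast_pos.2 hn).ne' 
    · exact h'
  rw [Pi.zero_apply, hc j, hc0]


lemma quad_continuous {N : ℕ} (M : Matrix (Fin N) (Fin N) ℝ) :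
    Continuous fun w : Fin N → ℝ => w ⬝ᵥ M.mulVec w := by
  simp only [dotProduct, Matrix.mulVec]
  refine continuous_finset_sum _ fun a _ => ?_
  exact (continuous_apply a).mul
    (continuous_finset_sum _ fun b _ => continuous_const.mul (continuous_apply b))

lemma exists_gap {m n d : ℕ} {H : Matrix (Fin m) (Fin n) ℝ} (hH : IsIncidence H)
    (hst : H.rank = n - 1) (hn : 1 ≤ n) :
    ∃ lam : ℝ, 0 < lam ∧ ∀ w : Fin n × Fin d → ℝ, (Umat n d)ᵀ.mulVec w = 0 →
      lam * (w ⬝ᵥ w) ≤ w ⬝ᵥ ((Hbar d H)ᵀ * Hbar d H).mulVec w := by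
  classical
  set L := (Hbar d H)ᵀ * Hbar d H with hL
  set f : (Fin n × Fin d → ℝ) → ℝ := fun w => w ⬝ᵥ L.mulVec w with hf
  have hfc : Continuous f := by
    simp only [hf, dotProduct, Matrix.mulVec]
    refine continuous_finset_sum _ fun a _ => ?_
    exact (continuous_apply a).mul
      (continuous_finset_sum _ fun b _ => continuous_const.mul (continuous_apply b))
  set S : Set (Fin n × Fin d → ℝ) :=
    {w | w ⬝ᵥ w = 1 ∧ (Umat n d)ᵀ.mulVec w = 0} with hS
  have hdot_c : Continuous fun w : Fin n × Fin d → ℝ => w ⬝ᵥ w := by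
    simp only [dotProduct]
    exact continuous_finset_sum _ fun a _ => (continuous_apply a).mul (continuous_apply a)
  have hU_c : Continuous fun w : Fin n × Fin d → ℝ => (Umat n d)ᵀ.mulVec w := by
    refine continuous_pi fun j => ?_
    simp only [Matrix.mulVec, dotProduct]
    exact continuous_finset_sum _ fun a _ => continuous_const.mul (continuous_apply a)
  have hSclosed : IsClosed S := by
    refine IsClosed.inter ?_ ?_
    · exact isClosed_eq hdot_c continuous_const
    · exact isClosed_eq hU_c continuous_const
  have hSbdd : S ⊆ Metric.closedBall 0 1 := by
    intro w hw
    rw [Metric.mem_closedBall, dist_zero_right]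
    rw [pi_norm_le_iff_of_nonneg zero_le_one]
    intro a
    rw [Real.norm_eq_abs, abs_le]
    have h1 : w a * w a ≤ 1 := by
      rw [← hw.1]
      rw [dotProduct]
      exact Finset.single_le_sum (fun b (_ : b ∈ Finset.univ) => mul_self_nonneg (w b))
        (Finset.mem_univ a)
    constructor <;> nlinarith
  by_cases hne : S.Nonempty
  · obtain ⟨w₀, hw₀S, hmin'⟩ :=
      (IsCompact.of_isClosed_subset (isCompact_closedBall 0 1) hSclosed hSbdd).exists_isMinOn
        hne hfc.continuousOn
    have hmin : ∀ w ∈ S, f w₀ ≤ f w := fun w hw => hmin' hw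
    have hw₀ne : w₀ ≠ 0 := by
      intro h
      have h1 : w₀ ⬝ᵥ w₀ = 1 := hw₀S.1
      rw [h] at h1
      simp at h1
    have hlam : 0 < f w₀ := gap_pos_on hH hst hn hw₀S.2 hw₀ne
    refine ⟨f w₀, hlam, fun w hUw => ?_⟩
    by_cases hw : w = 0
    · subst hw; simp
    · have hpos : 0 < w ⬝ᵥ w := dotProduct_self_pos hw
      set c : ℝ := (Real.sqrt (w ⬝ᵥ w))⁻¹ with hc
      have hc2 : c^2 * (w ⬝ᵥ w) = 1 := by
        rw [hc, ← Real.sqrt_inv]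
        rw [Real.sq_sqrt (inv_nonneg.2 hpos.le)]
        exact inv_mul_cancel₀ hpos.ne'
      have hcw : c • w ∈ S := by
        constructor
        · rw [smul_dotProduct, dotProduct_smul, smul_eq_mul, smul_eq_mul,
            ← mul_assoc, ← sq]
          exact hc2
        · rw [Matrix.mulVec_smul, hUw, smul_zero]
      have := hmin (c • w) hcw
      have hfcw : f (c • w) = c^2 * f w := by
        simp only [hf]
        rw [Matrix.mulVec_smul, smul_dotProduct, dotProduct_smul,
          smul_eq_mul, smul_eq_mul, ← mul_assoc, ← sq]
      rw [hfcw] at this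
      -- f w₀ ≤ c² f w ; multiply by w⬝w = c⁻²
      have h3 : f w₀ * (w ⬝ᵥ w) ≤ c^2 * f w * (w ⬝ᵥ w) :=
        mul_le_mul_of_nonneg_right this hpos.le
      calc f w₀ * (w ⬝ᵥ w) ≤ c^2 * f w * (w ⬝ᵥ w) := h3
        _ = (c^2 * (w ⬝ᵥ w)) * f w := by ring
        _ = f w := by rw [hc2, one_mul]
  · refine ⟨1, one_pos, fun w hUw => ?_⟩
    by_cases hw : w = 0
    · subst hw; simp
    · exfalso
      apply hne
      have hpos : 0 < w ⬝ᵥ w := dotProduct_self_pos hw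
      set c : ℝ := (Real.sqrt (w ⬝ᵥ w))⁻¹ with hc
      have hc2 : c^2 * (w ⬝ᵥ w) = 1 := by
        rw [hc, ← Real.sqrt_inv]
        rw [Real.sq_sqrt (inv_nonneg.2 hpos.le)]
        exact inv_mul_cancel₀ hpos.ne'
      refine ⟨c • w, ?_, ?_⟩
      · rw [smul_dotProduct, dotProduct_smul, smul_eq_mul, smul_eq_mul,
          ← mul_assoc, ← sq]
        exact hc2
      · rw [Matrix.mulVec_smul, hUw, smul_zero]

/-! ### continuity -/

lemma edge_cont {m n d : ℕ} (H : Matrix (Fin m) (Fin n) ℝ) {p : ℝ → Fin n × Fin d → ℝ}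
    (hp : Continuous p) (k : Fin m) (i : Fin d) :
    Continuous fun t => edgeVec H (p t) k i := by
  have : ∀ t, edgeVec H (p t) k i = ∑ j, H k j * p t (j, i) :=
    fun t => hbar_mulVec H (p t) k i
  simp only [this]
  exact continuous_finset_sum _ fun j _ =>
    continuous_const.mul ((continuous_apply (j, i)).comp hp)

lemma bearing_cont {m n d : ℕ} (H : Matrix (Fin m) (Fin n) ℝ) {p : ℝ → Fin n × Fin d → ℝ}
    (hp : Continuous p) (hnz : ∀ t k, edgeVec H (p t) k ≠ 0) (k : Fin m) (i : Fin d) :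
    Continuous fun t => bearingOf (edgeVec H (p t) k) i := by
  have hdot : Continuous fun t => edgeVec H (p t) k ⬝ᵥ edgeVec H (p t) k := by
    simp only [dotProduct]
    exact continuous_finset_sum _ fun i' _ =>
      (edge_cont H hp k i').mul (edge_cont H hp k i')
  have henorm : Continuous fun t => _root_.enorm (edgeVec H (p t) k) :=
    Real.continuous_sqrt.comp hdot
  have hne : ∀ t, _root_.enorm (edgeVec H (p t) k) ≠ 0 := fun t => (enorm_pos_fin (hnz t k)).ne'
  have : ∀ t, bearingOf (edgeVec H (p t) k) i
      = (_root_.enorm (edgeVec H (p t) k))⁻¹ * edgeVec H (p t) k i := fun t => rfl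
  simp only [this]
  exact (henorm.inv₀ hne).mul (edge_cont H hp k i)

lemma LB_cont {m n d : ℕ} (H : Matrix (Fin m) (Fin n) ℝ) {p : ℝ → Fin n × Fin d → ℝ}
    (hp : Continuous p) (hnz : ∀ t k, edgeVec H (p t) k ≠ 0) (a b : Fin n × Fin d) :
    Continuous fun t => LB H (p t) a b := by
  have expand : ∀ t, LB H (p t) a b = ∑ y : Fin m × Fin d, ∑ x : Fin m × Fin d,
      (Hbar d H)ᵀ a x * blkProj (fun k => bearingOf (edgeVec H (p t) k)) x y * Hbar d H y b := by
    intro t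
    rw [LB, Matrix.mul_apply]
    refine Finset.sum_congr rfl fun y _ => ?_
    rw [Matrix.mul_apply, Finset.sum_mul]
  simp only [expand]
  refine continuous_finset_sum _ fun y _ => continuous_finset_sum _ fun x _ => ?_
  refine Continuous.mul (continuous_const.mul ?_) continuous_const
  by_cases h : x.1 = y.1
  · have : ∀ t, blkProj (fun k => bearingOf (edgeVec H (p t) k)) x y
        = (if x.2 = y.2 then (1:ℝ) else 0)
          - bearingOf (edgeVec H (p t) x.1) x.2 * bearingOf (edgeVec H (p t) x.1) y.2 := by
      intro t
      simp only [blkProj, Matrix.of_apply, if_pos h, proj, Matrix.sub_apply,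
        Matrix.one_apply, Matrix.vecMulVec_apply]
    simp only [this]
    exact continuous_const.sub
      ((bearing_cont H hp hnz x.1 x.2).mul (bearing_cont H hp hnz x.1 y.2))
  · have : ∀ t, blkProj (fun k => bearingOf (edgeVec H (p t) k)) x y = 0 := by
      intro t
      simp only [blkProj, Matrix.of_apply, if_neg h]
    simp only [this]
    exact continuous_const

/-! ### integral Cauchy–Schwarz -/

lemma integral_sq_le {f : ℝ → ℝ} (hf : Continuous f) {t τ : ℝ} (h : t ≤ τ) :
    (∫ s in t..τ, f s)^2 ≤ (τ - t) * ∫ s in t..τ, (f s)^2 := by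
  set A := ∫ s in t..τ, f s with hA
  set B := ∫ s in t..τ, (f s)^2 with hB
  have h1 : 0 ≤ ∫ s in t..τ, ((τ - t) * f s - A)^2 :=
    intervalIntegral.integral_nonneg h (fun s _ => sq_nonneg _)
  have h2 : (∫ s in t..τ, ((τ - t) * f s - A)^2)
      = (τ-t)^2 * B - 2*(τ-t)*A*A + A^2*(τ-t) := by
    have e : ∀ s, ((τ - t) * f s - A)^2
        = (τ-t)^2 * (f s)^2 - 2*(τ-t)*A * f s + A^2 := by intro s; ring
    simp only [e]
    rw [intervalIntegral.integral_add, intervalIntegral.integral_sub]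
    · rw [intervalIntegral.integral_const_mul, intervalIntegral.integral_const_mul,
        intervalIntegral.integral_const]
      rw [← hA, ← hB]
      simp only [smul_eq_mul]
      ring
    · exact (continuous_const.mul (hf.pow 2)).intervalIntegrable _ _
    · exact (continuous_const.mul hf).intervalIntegrable _ _
    · exact ((continuous_const.mul (hf.pow 2)).sub
        (continuous_const.mul hf)).intervalIntegrable _ _
    · exact continuous_const.intervalIntegrable _ _
  rw [h2] at h1
  rcases eq_or_lt_of_le h with heq | hlt
  · subst heq
    simp [hA]
  · nlinarith [h1, hlt]



set_option maxHeartbeats 2000000 in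
/-- for a bearing persistently exciting formation over a graph with a
spanning tree, the observer `dp̂/dt = v - L_B(t) p̂` recovers the configuration `p(t)`
up to the fixed translational vector `(1/n) U Uᵀ (p̂(0) - p(0))`: the error
`ζ(t) = p̂(t) - p(t) - (1/n) U Uᵀ (p̂(0) - p(0))` is uniformly globally exponentially
stable. -/
theorem statement_4 {d m n : ℕ} (hd : 2 ≤ d)
    (H : Matrix (Fin m) (Fin n) ℝ) (hH : IsIncidence H)
    -- the graph has a spanning tree (is connected): rank H = n - 1
    (hst : H.rank = n - 1)
    (p : ℝ → Fin n × Fin d → ℝ) (hp : Differentiable ℝ p)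
    (hvbdd : ∃ C : ℝ, ∀ t : ℝ, ‖deriv p t‖ ≤ C)
    (hnz : ∀ t : ℝ, ∀ k : Fin m, edgeVec H (p t) k ≠ 0)
    -- bearing persistence of excitation of the formation
    (T μ : ℝ) (hT : 0 < T) (hμ : 0 < μ)
    (hBPE : ∀ t : ℝ, ∀ x : Fin n × Fin d → ℝ,
      μ * (x ⬝ᵥ ((Hbar d H)ᵀ * Hbar d H).mulVec x) ≤
        x ⬝ᵥ (Matrix.of fun a b => ∫ τ in t..(t + T), LB H (p τ) a b).mulVec x)
    -- observer dynamics
    (phat : ℝ → Fin n × Fin d → ℝ) (hphat : Differentiable ℝ phat)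
    (hobs : ∀ t : ℝ, deriv phat t = deriv p t - (LB H (p t)).mulVec (phat t)) :
    ∃ c > (0 : ℝ), ∃ lam > (0 : ℝ), ∀ t₀ t : ℝ, t₀ ≤ t →
      ‖phat t - p t - (n : ℝ)⁻¹ •
          (Umat n d).mulVec ((Umat n d)ᵀ.mulVec (phat 0 - p 0))‖ ≤
        c * ‖phat t₀ - p t₀ - (n : ℝ)⁻¹ •
          (Umat n d).mulVec ((Umat n d)ᵀ.mulVec (phat 0 - p 0))‖ *
          Real.exp (-lam * (t - t₀)) := by
  classical
  rcases Nat.eq_zero_or_pos n with hn0 | hn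
  · subst hn0
    refine ⟨1, one_pos, 1, one_pos, fun t₀ t _ => ?_⟩
    have hz : ∀ v : Fin 0 × Fin d → ℝ, ‖v‖ = 0 := fun v => by
      have : v = 0 := funext fun a => a.1.elim0
      rw [this, norm_zero]
    rw [hz, hz]
    positivity
  have hncast : (0:ℝ) < n := Nat.cast_pos.2 hn
  set c₀ : Fin n × Fin d → ℝ :=
    (n : ℝ)⁻¹ • (Umat n d).mulVec ((Umat n d)ᵀ.mulVec (phat 0 - p 0)) with hc₀
  set Z : ℝ → Fin n × Fin d → ℝ := fun t => phat t - p t - c₀ with hZ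
  -- derivative of Z
  have hLBc0 : ∀ t, (LB H (p t)).mulVec c₀ = 0 := by
    intro t
    rw [hc₀, Matrix.mulVec_smul, LB_U_zero hH, smul_zero]
  have hZderiv : ∀ t, HasDerivAt Z (-(LB H (p t)).mulVec (Z t)) t := by
    intro t
    have h1 : HasDerivAt Z (deriv phat t - deriv p t) t :=
      (((hphat t).hasDerivAt).sub ((hp t).hasDerivAt)).sub_const c₀
    have h2 : deriv phat t - deriv p t = -(LB H (p t)).mulVec (Z t) := by
      rw [hobs t]
      have he : phat t = Z t + p t + c₀ := by simp only [hZ]; abel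
      have : (LB H (p t)).mulVec (phat t) = (LB H (p t)).mulVec (Z t) := by
        conv_lhs => rw [he]
        rw [Matrix.mulVec_add, Matrix.mulVec_add, LB_p_zero H (hnz t), hLBc0 t,
          add_zero, add_zero]
      rw [this]
      abel
    rwa [h2] at h1
  have hZa : ∀ t a, HasDerivAt (fun s => Z s a) (-(LB H (p t)).mulVec (Z t) a) t :=
    fun t a => (hasDerivAt_pi.1 (hZderiv t)) a
  have hZcont : Continuous Z := by
    have : Differentiable ℝ Z := fun t => (hZderiv t).differentiableAt
    exact this.continuous
  have hpc : Continuous p := hp.continuous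
  have hLBc : ∀ a b, Continuous fun t => LB H (p t) a b := LB_cont H hpc hnz
  set q : ℝ → ℝ := fun t => Z t ⬝ᵥ (LB H (p t)).mulVec (Z t) with hq
  have hLBZc : ∀ a, Continuous fun t => (LB H (p t)).mulVec (Z t) a := by
    intro a
    simp only [Matrix.mulVec, dotProduct]
    exact continuous_finset_sum _ fun b _ =>
      (hLBc a b).mul ((continuous_apply b).comp hZcont)
  have hqc : Continuous q := by
    simp only [hq, dotProduct]
    exact continuous_finset_sum _ fun a _ =>
      ((continuous_apply a).comp hZcont).mul (hLBZc a)
  have hqnn : ∀ t, 0 ≤ q t := fun t => LB_quad_nonneg H (hnz t) (Z t)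
  set E : ℝ → ℝ := fun t => Z t ⬝ᵥ Z t with hE
  have hEnn : ∀ t, 0 ≤ E t := fun t => dotProduct_self_nonneg _
  have hEderiv : ∀ t, HasDerivAt E (-2 * q t) t := by
    intro t
    have h1 : HasDerivAt (fun s => ∑ a, Z s a * Z s a)
        (∑ a, (-(LB H (p t)).mulVec (Z t) a * Z t a
          + Z t a * -(LB H (p t)).mulVec (Z t) a)) t :=
      HasDerivAt.fun_sum fun a _ => (hZa t a).mul (hZa t a)
    have h2 : (∑ a, (-(LB H (p t)).mulVec (Z t) a * Z t a
        + Z t a * -(LB H (p t)).mulVec (Z t) a)) = -2 * q t := by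
      rw [hq]
      simp only [dotProduct]
      rw [Finset.mul_sum]
      exact Finset.sum_congr rfl fun a _ => by ring
    rwa [h2] at h1
  have hEdiff : Differentiable ℝ E := fun t => (hEderiv t).differentiableAt
  have hEanti : Antitone E := by
    apply antitone_of_deriv_nonpos hEdiff
    intro t
    rw [(hEderiv t).deriv]
    have := hqnn t
    linarith
  -- ζ stays orthogonal to range U
  have hUZ : ∀ t, (Umat n d)ᵀ.mulVec (Z t) = 0 := by
    have hUcomp : ∀ j : Fin d, ∀ t : ℝ, (∑ jn, Z t (jn, j)) = 0 := by
      intro j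
      have hder : ∀ t, HasDerivAt (fun s => ∑ jn, Z s (jn, j)) 0 t := by
        intro t
        have h1 : HasDerivAt (fun s => ∑ jn, Z s (jn, j))
            (∑ jn, -(LB H (p t)).mulVec (Z t) (jn, j)) t :=
          HasDerivAt.fun_sum fun jn _ => hZa t (jn, j)
        have h2 : (∑ jn : Fin n, -(LB H (p t)).mulVec (Z t) (jn, j)) = 0 := by
          rw [Finset.sum_neg_distrib, LB_col_sum hH, neg_zero]
        rwa [h2] at h1
      have hconst := is_const_of_deriv_eq_zero
        (fun t => (hder t).differentiableAt) (fun t => (hder t).deriv)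
      have hzero : (∑ jn, Z 0 (jn, j)) = 0 := by
        have e1 : (∑ jn, Z 0 (jn, j)) = (Umat n d)ᵀ.mulVec (Z 0) j := (UT_apply _ j).symm
        have e2 : Z 0 = (phat 0 - p 0) - c₀ := rfl
        rw [e1, e2, Matrix.mulVec_sub, hc₀, Matrix.mulVec_smul]
        simp only [Pi.sub_apply, Pi.smul_apply, smul_eq_mul]
        rw [UTU]
        field_simp
        ring
      intro t
      rw [hconst t 0, hzero]
    intro t
    funext j
    rw [UT_apply, hUcomp j t]
    rfl
  obtain ⟨lam2, hlam2, hgap⟩ := exists_gap (d := d) hH hst hn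
  set ρ : ℝ := μ * lam2 / (2 + 16 * m^2 * T^2) with hρ
  have hρpos : 0 < ρ := div_pos (mul_pos hμ hlam2) (by positivity)
  set r : ℝ := max (1 - 2*ρ) (1/2) with hr
  have hr0 : (0:ℝ) < r := lt_of_lt_of_le one_half_pos (le_max_right _ _)
  have hr1 : r < 1 := max_lt (by linarith) (by norm_num)
  -- key decay over one period
  have hkey : ∀ t : ℝ, E (t + T) ≤ r * E t := by
    intro t
    have htT : t ≤ t + T := by linarith
    set S := ∫ τ in t..t+T, q τ with hS
    have hqInt : IntervalIntegrable q volume t (t+T) := hqc.intervalIntegrable _ _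
    have hSnn : 0 ≤ S := intervalIntegral.integral_nonneg htT fun s _ => hqnn s
    have hEeq : E (t+T) = E t - 2*S := by
      have h1 : ∫ τ in t..t+T, (-2 * q τ) = E (t+T) - E t :=
        intervalIntegral.integral_eq_sub_of_hasDerivAt (fun τ _ => hEderiv τ)
          ((continuous_const.mul hqc).intervalIntegrable _ _)
      rw [intervalIntegral.integral_const_mul] at h1
      rw [← hS] at h1
      linarith
    have hLBZsqInt : ∀ u v : ℝ, IntervalIntegrable
        (fun s => ∑ a, ((LB H (p s)).mulVec (Z s) a)^2) volume u v := by
      intro u v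
      exact (continuous_finset_sum _ fun a _ => (hLBZc a).pow 2).intervalIntegrable _ _
    have hdelta : ∀ τ ∈ Set.Icc t (t+T), (Z τ - Z t) ⬝ᵥ (Z τ - Z t) ≤ 2*m*T*S := by
      intro τ hτ
      obtain ⟨hτ1, hτ2⟩ := hτ
      have hcomp : ∀ a, Z τ a - Z t a = ∫ s in t..τ, (-(LB H (p s)).mulVec (Z s) a) := by
        intro a
        exact (intervalIntegral.integral_eq_sub_of_hasDerivAt (fun s _ => hZa s a)
          (((hLBZc a).neg).intervalIntegrable _ _)).symm
      have hsq : ∀ a, (Z τ a - Z t a)^2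
          ≤ (τ - t) * ∫ s in t..τ, ((LB H (p s)).mulVec (Z s) a)^2 := by
        intro a
        rw [hcomp a]
        have := integral_sq_le (f := fun s => -(LB H (p s)).mulVec (Z s) a)
          ((hLBZc a).neg) hτ1
        simpa [neg_sq] using this
      calc (Z τ - Z t) ⬝ᵥ (Z τ - Z t) = ∑ a, (Z τ a - Z t a)^2 := by
            simp [dotProduct, sq]
        _ ≤ ∑ a, (τ - t) * ∫ s in t..τ, ((LB H (p s)).mulVec (Z s) a)^2 :=
            Finset.sum_le_sum fun a _ => hsq a
        _ = (τ - t) * ∫ s in t..τ, ∑ a, ((LB H (p s)).mulVec (Z s) a)^2 := by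
            rw [← Finset.mul_sum, intervalIntegral.integral_finset_sum]
            intro a _
            exact ((hLBZc a).pow 2).intervalIntegrable _ _
        _ ≤ (τ - t) * ∫ s in t..τ, 2*m*(q s) := by
            refine mul_le_mul_of_nonneg_left ?_ (by linarith)
            refine intervalIntegral.integral_mono_on hτ1 (hLBZsqInt t τ)
              ((continuous_const.mul hqc).intervalIntegrable _ _) fun s _ => ?_
            have h1 := LB_mulVec_sq_le hH (hnz s) (Z s)
            have h2 : ((LB H (p s)).mulVec (Z s)) ⬝ᵥ ((LB H (p s)).mulVec (Z s))
                = ∑ a, ((LB H (p s)).mulVec (Z s) a)^2 := by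
              simp [dotProduct, sq]
            rw [h2] at h1
            exact h1
        _ ≤ (τ - t) * (2*m*S) := by
            refine mul_le_mul_of_nonneg_left ?_ (by linarith)
            have hint1 : IntervalIntegrable (fun s => 2*m*q s) volume t τ :=
              (continuous_const.mul hqc).intervalIntegrable _ _
            have hint2 : IntervalIntegrable (fun s => 2*m*q s) volume τ (t+T) :=
              (continuous_const.mul hqc).intervalIntegrable _ _
            have hsplit := intervalIntegral.integral_add_adjacent_intervals hint1 hint2
            have h2 : 0 ≤ ∫ s in τ..(t+T), 2*m*q s :=
              intervalIntegral.integral_nonneg hτ2 fun s _ => by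
                have := hqnn s; positivity
            have h3 : ∫ s in t..(t+T), 2*m*q s = 2*m*S := by
              rw [hS, ← intervalIntegral.integral_const_mul]
            linarith
        _ ≤ T * (2*m*S) := by
            refine mul_le_mul_of_nonneg_right (by linarith) (by positivity)
        _ = 2*m*T*S := by ring
    have hwc : Continuous fun τ => Z t ⬝ᵥ (LB H (p τ)).mulVec (Z t) := by
      simp only [dotProduct, Matrix.mulVec]
      refine continuous_finset_sum _ fun a _ => continuous_const.mul ?_
      exact continuous_finset_sum _ fun b _ => (hLBc a b).mul continuous_const
    have hw : ∀ τ ∈ Set.Icc t (t+T),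
        Z t ⬝ᵥ (LB H (p τ)).mulVec (Z t) ≤ 2 * q τ + 8*m*(2*m*T*S) := by
      intro τ hτ
      have h1 := quad_sub_le H (hnz τ) (Z τ) (Z τ - Z t)
      have he : Z τ - (Z τ - Z t) = Z t := by abel
      rw [he] at h1
      have h2 := LB_quad_le hH (p τ) (Z τ - Z t)
      have h3 := hdelta τ hτ
      have h4 : (4:ℝ)*m*((Z τ - Z t) ⬝ᵥ (Z τ - Z t)) ≤ 4*m*(2*m*T*S) := by
        refine mul_le_mul_of_nonneg_left h3 (by positivity)
      have hqτ : Z τ ⬝ᵥ (LB H (p τ)).mulVec (Z τ) = q τ := rfl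
      rw [hqτ] at h1
      linarith
    have hwInt : ∫ τ in t..t+T, (Z t ⬝ᵥ (LB H (p τ)).mulVec (Z t))
        ≤ 2*S + 8*m*(2*m*T*S)*T := by
      calc ∫ τ in t..t+T, (Z t ⬝ᵥ (LB H (p τ)).mulVec (Z t))
          ≤ ∫ τ in t..t+T, (2*q τ + 8*m*(2*m*T*S)) :=
            intervalIntegral.integral_mono_on htT (hwc.intervalIntegrable _ _)
              (((continuous_const.mul hqc).add continuous_const).intervalIntegrable _ _) hw
        _ = 2*S + 8*m*(2*m*T*S)*T := by
            rw [intervalIntegral.integral_add (f := fun τ => 2*q τ) (g := fun _ => 8*m*(2*m*T*S))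
              ((continuous_const.mul hqc).intervalIntegrable _ _)
              (continuous_const.intervalIntegrable _ _),
              intervalIntegral.integral_const_mul, intervalIntegral.integral_const, ← hS]
            simp only [smul_eq_mul]
            ring
    have hswap : Z t ⬝ᵥ (Matrix.of fun a b => ∫ τ in t..(t+T), LB H (p τ) a b).mulVec (Z t)
        = ∫ τ in t..t+T, (Z t ⬝ᵥ (LB H (p τ)).mulVec (Z t)) := by
      simp only [dotProduct, Matrix.mulVec, Matrix.of_apply]
      rw [intervalIntegral.integral_finset_sum]
      · refine Finset.sum_congr rfl fun a _ => ?_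
        rw [intervalIntegral.integral_const_mul]
        congr 1
        rw [intervalIntegral.integral_finset_sum (f := fun b τ => LB H (p τ) a b * Z t b) (fun b _ =>
          ((hLBc a b).mul continuous_const).intervalIntegrable _ _)]
        exact Finset.sum_congr rfl fun b _ => (intervalIntegral.integral_mul_const _ _).symm
      · intro a _
        refine Continuous.intervalIntegrable ?_ _ _
        exact continuous_const.mul (continuous_finset_sum _ fun b _ =>
          (hLBc a b).mul continuous_const)
    have hBPEt := hBPE t (Z t)
    rw [hswap] at hBPEt
    have hLgap := hgap (Z t) (hUZ t)
    have hEt_eq : Z t ⬝ᵥ Z t = E t := rfl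
    rw [hEt_eq] at hLgap
    have hmul := mul_le_mul_of_nonneg_left hLgap hμ.le
    have hS_lower : μ * (lam2 * E t) ≤ 2*S + 8*m*(2*m*T*S)*T := by
      calc μ * (lam2 * E t) ≤ μ * (Z t ⬝ᵥ ((Hbar d H)ᵀ * Hbar d H).mulVec (Z t)) := hmul
        _ ≤ ∫ τ in t..t+T, (Z t ⬝ᵥ (LB H (p τ)).mulVec (Z t)) := hBPEt
        _ ≤ 2*S + 8*m*(2*m*T*S)*T := hwInt
    have hSge : ρ * E t ≤ S := by
      rw [hρ, div_mul_eq_mul_div, div_le_iff₀ (by positivity : (0:ℝ) < 2 + 16*m^2*T^2)]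
      nlinarith [hS_lower]
    rw [hEeq]
    have hfin : E t - 2*S ≤ (1-2*ρ) * E t := by nlinarith [hSge]
    calc E t - 2*S ≤ (1-2*ρ) * E t := hfin
      _ ≤ r * E t := mul_le_mul_of_nonneg_right (le_max_left _ _) (hEnn t)
  -- iterate
  have hiter : ∀ (s : ℝ) (k : ℕ), E (s + k*T) ≤ r^k * E s := by
    intro s k
    induction k with
    | zero => simp
    | succ k ih =>
      have he : s + ((k:ℕ)+1 : ℕ)*T = (s + k*T) + T := by push_cast; ring
      rw [he]
      calc E ((s + k*T) + T) ≤ r * E (s + k*T) := hkey _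
        _ ≤ r * (r^k * E s) := mul_le_mul_of_nonneg_left ih hr0.le
        _ = r^(k+1) * E s := by ring
  set lam : ℝ := -Real.log r / T with hlam
  have hlogneg : Real.log r < 0 := Real.log_neg hr0 hr1
  have hlampos : 0 < lam := div_pos (by linarith) hT
  have hcard : (Fintype.card (Fin n × Fin d) : ℝ) = (n*d : ℕ) := by
    simp [Fintype.card_prod]
  have hndpos : (0:ℝ) < ((n*d : ℕ) : ℝ) := by
    have : 0 < n*d := Nat.mul_pos hn (by omega)
    exact_mod_cast this
  refine ⟨Real.sqrt (((n*d : ℕ) : ℝ) / r), Real.sqrt_pos.2 (div_pos hndpos hr0),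
    lam/2, by positivity, fun t₀ t hle => ?_⟩
  set k := ⌊(t - t₀)/T⌋₊ with hk
  have hx0 : 0 ≤ (t - t₀)/T := div_nonneg (by linarith) hT.le
  have hkle : t₀ + k*T ≤ t := by
    have h1 : (k:ℝ) ≤ (t-t₀)/T := Nat.floor_le hx0
    have h2 : (k:ℝ)*T ≤ t - t₀ := by
      rw [← div_mul_cancel₀ (t-t₀) hT.ne']
      exact mul_le_mul_of_nonneg_right h1 hT.le
    linarith
  have hEt : E t ≤ r^k * E t₀ := le_trans (hEanti hkle) (hiter t₀ k)
  have hexp : (r:ℝ)^k ≤ r⁻¹ * Real.exp (-lam * (t - t₀)) := by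
    have hklow : (t - t₀)/T - 1 < k := Nat.sub_one_lt_floor _
    have h1 : (r:ℝ)^k = Real.exp (k * Real.log r) := by
      rw [← Real.log_pow, Real.exp_log (pow_pos hr0 k)]
    rw [h1]
    have h2 : (k:ℝ) * Real.log r ≤ ((t-t₀)/T - 1) * Real.log r :=
      mul_le_mul_of_nonpos_right hklow.le hlogneg.le
    calc Real.exp ((k:ℝ) * Real.log r) ≤ Real.exp (((t-t₀)/T - 1) * Real.log r) :=
          Real.exp_le_exp.2 h2
      _ = r⁻¹ * Real.exp (-lam*(t-t₀)) := by
          have he : ((t-t₀)/T - 1) * Real.log r = -Real.log r + (-lam*(t-t₀)) := by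
            rw [hlam]
            field_simp
            ring
          rw [he, Real.exp_add, ← Real.exp_log hr0, ← Real.exp_neg]
          rw [Real.exp_log hr0]
  -- norms
  have hZt_le : ‖Z t‖ ≤ Real.sqrt (E t) := by
    rw [pi_norm_le_iff_of_nonneg (Real.sqrt_nonneg _)]
    intro a
    rw [Real.norm_eq_abs, ← Real.sqrt_sq_eq_abs]
    apply Real.sqrt_le_sqrt
    calc (Z t a)^2 = Z t a * Z t a := sq (Z t a)
      _ ≤ ∑ b, Z t b * Z t b :=
          Finset.single_le_sum (fun b (_ : b ∈ Finset.univ) => mul_self_nonneg (Z t b))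
            (Finset.mem_univ a)
      _ = E t := rfl
  have hEt₀_le : E t₀ ≤ ((n*d : ℕ) : ℝ) * ‖Z t₀‖^2 := by
    have h1 : ∀ a : Fin n × Fin d, Z t₀ a * Z t₀ a ≤ ‖Z t₀‖^2 := by
      intro a
      have := norm_le_pi_norm (Z t₀) a
      rw [Real.norm_eq_abs] at this
      nlinarith [abs_nonneg (Z t₀ a), le_abs_self (Z t₀ a), neg_abs_le (Z t₀ a)]
    calc E t₀ = ∑ a, Z t₀ a * Z t₀ a := rfl
      _ ≤ ∑ _a : Fin n × Fin d, ‖Z t₀‖^2 := Finset.sum_le_sum fun a _ => h1 a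
      _ = ((n*d : ℕ) : ℝ) * ‖Z t₀‖^2 := by
          rw [Finset.sum_const, Finset.card_univ, nsmul_eq_mul, hcard]
  have hgoal : ‖Z t‖ ≤ Real.sqrt (((n*d : ℕ) : ℝ) / r) * ‖Z t₀‖
      * Real.exp (-(lam/2) * (t - t₀)) := by
    have hstep : E t ≤ (r⁻¹ * Real.exp (-lam*(t-t₀))) * (((n*d : ℕ) : ℝ) * ‖Z t₀‖^2) := by
      calc E t ≤ r^k * E t₀ := hEt
        _ ≤ (r⁻¹ * Real.exp (-lam*(t-t₀))) * (((n*d : ℕ) : ℝ) * ‖Z t₀‖^2) := by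
            refine mul_le_mul hexp hEt₀_le (hEnn t₀) (by positivity)
    have hfactor : (r⁻¹ * Real.exp (-lam*(t-t₀))) * (((n*d : ℕ) : ℝ) * ‖Z t₀‖^2)
        = (Real.sqrt (((n*d : ℕ) : ℝ) / r) * ‖Z t₀‖ * Real.exp (-(lam/2) * (t - t₀)))^2 := by
      rw [mul_pow, mul_pow, Real.sq_sqrt (by positivity : (0:ℝ) ≤ ((n*d : ℕ) : ℝ) / r)]
      have hE2 : (Real.exp (-(lam/2)*(t-t₀)))^2 = Real.exp (-lam*(t-t₀)) := by
        rw [sq, ← Real.exp_add]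
        ring_nf
      rw [hE2]
      field_simp
    calc ‖Z t‖ ≤ Real.sqrt (E t) := hZt_le
      _ ≤ Real.sqrt ((Real.sqrt (((n*d : ℕ) : ℝ) / r) * ‖Z t₀‖
            * Real.exp (-(lam/2) * (t - t₀)))^2) := by
          apply Real.sqrt_le_sqrt
          rw [← hfactor]
          exact hstep
      _ = Real.sqrt (((n*d : ℕ) : ℝ) / r) * ‖Z t₀‖ * Real.exp (-(lam/2) * (t - t₀)) := by
          rw [Real.sqrt_sq (by positivity)]
  exact hgoal
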